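/- Suppose three maps d₁, d₂, d₃ : ℝ² → ℝ³ form an orthonormal frame at every point, are C², and satisfy ∂ₛdₖ = κ × dₖ and ∂ₜdₖ = ω × dₖ for k = 1,2,3, where κ, ω : ℝ² → ℝ³ are C¹. Then the compatibility equation ∂ₜκ = ∂ₛω + ω × κ holds at every point. -/

import Mathlib

open Matrix

noncomputable def crossL : (Fin 3 → ℝ) →L[ℝ] (Fin 3 → ℝ) →L[ℝ] (Fin 3 → ℝ) :=
  LinearMap.toContinuousLinearMap
    ((LinearMap.toContinuousLinearMap :
        ((Fin 3 → ℝ) →ₗ[ℝ] (Fin 3 → ℝ)) ≃ₗ[ℝ] ((Fin 3 → ℝ) →L[ℝ] (Fin 3 → ℝ))).toLinearMap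
      ∘ₗ crossProduct)

@[simp] lemma crossL_apply (u v : Fin 3 → ℝ) : crossL u v = u ⨯₃ v := rfl

lemma triple_cross (u v : Fin 3 → ℝ) :
    v ⨯₃ (u ⨯₃ v) = (v ⬝ᵥ v) • u - (v ⬝ᵥ u) • v := by
  ext i
  fin_cases i <;>
    simp [crossProduct, dotProduct, Fin.sum_univ_three] <;> ring

theorem stmt_7 (d : Fin 3 → ℝ × ℝ → Fin 3 → ℝ) (κ ω : ℝ × ℝ → Fin 3 → ℝ)
    (hd : ∀ k, ContDiff ℝ 2 (d k)) (hκ : ContDiff ℝ 1 κ) (hω : ContDiff ℝ 1 ω)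
    (horth : ∀ (z : ℝ × ℝ) (i j : Fin 3),
      d i z ⬝ᵥ d j z = if i = j then 1 else 0)
    (hs : ∀ (k : Fin 3) (z : ℝ × ℝ), fderiv ℝ (d k) z (1, 0) = κ z ⨯₃ d k z)
    (ht : ∀ (k : Fin 3) (z : ℝ × ℝ), fderiv ℝ (d k) z (0, 1) = ω z ⨯₃ d k z) :
    ∀ z : ℝ × ℝ,
      fderiv ℝ κ z (0, 1) = fderiv ℝ ω z (1, 0) + ω z ⨯₃ κ z := by
  intro z
  -- differentiability facts
  have hκd : ∀ y, DifferentiableAt ℝ κ y := fun y => (hκ.differentiable one_ne_zero) y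
  have hωd : ∀ y, DifferentiableAt ℝ ω y := fun y => (hω.differentiable one_ne_zero) y
  have hdd : ∀ k y, DifferentiableAt ℝ (d k) y := fun k y =>
    ((hd k).differentiable two_ne_zero) y
  -- key: for each k, the mixed partials coincide, yielding the relation
  have key : ∀ k : Fin 3,
      fderiv ℝ κ z (0, 1) ⨯₃ d k z + κ z ⨯₃ (ω z ⨯₃ d k z)
        = fderiv ℝ ω z (1, 0) ⨯₃ d k z + ω z ⨯₃ (κ z ⨯₃ d k z) := by
    intro k
    have hf' : ContDiff ℝ 1 (fderiv ℝ (d k)) := (hd k).fderiv_right (m := 1) (by norm_num)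
    have hdf : ∀ y, DifferentiableAt ℝ (fderiv ℝ (d k)) y := fun y =>
      (hf'.differentiable one_ne_zero) y
    -- derivative of y ↦ fderiv (d k) y v
    have hder : ∀ (v : ℝ × ℝ) (y : ℝ × ℝ), HasFDerivAt (fun y => fderiv ℝ (d k) y v)
        ((fderiv ℝ (fderiv ℝ (d k)) y).flip v) y := by
      intro v y
      have h := (hdf y).hasFDerivAt.clm_apply (hasFDerivAt_const v y)
      have : (fderiv ℝ (d k) y).comp (0 : (ℝ × ℝ) →L[ℝ] (ℝ × ℝ))
          + (fderiv ℝ (fderiv ℝ (d k)) y).flip v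
          = (fderiv ℝ (fderiv ℝ (d k)) y).flip v := by
        simp
      rwa [this] at h
    -- derivative of cross-product expressions
    have hcross : ∀ (a : ℝ × ℝ → Fin 3 → ℝ), (∀ y, DifferentiableAt ℝ a y) →
        ∀ (y w : ℝ × ℝ), fderiv ℝ (fun y => a y ⨯₃ d k y) y w
          = fderiv ℝ a y w ⨯₃ d k y + a y ⨯₃ fderiv ℝ (d k) y w := by
      intro a ha y w
      have hc : HasFDerivAt (fun y => crossL (a y)) (crossL.comp (fderiv ℝ a y)) y :=
        crossL.hasFDerivAt.comp y (ha y).hasFDerivAt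
      have h := hc.clm_apply (hdd k y).hasFDerivAt
      have h2 := h.fderiv
      calc fderiv ℝ (fun y => a y ⨯₃ d k y) y w
          = fderiv ℝ (fun y => crossL (a y) (d k y)) y w := by simp
        _ = ((crossL (a y)).comp (fderiv ℝ (d k) y)
              + (crossL.comp (fderiv ℝ a y)).flip (d k y)) w := by rw [h2]
        _ = fderiv ℝ a y w ⨯₃ d k y + a y ⨯₃ fderiv ℝ (d k) y w := by
            simp [add_comm]
    -- symmetry of second derivative
    have hsymm : fderiv ℝ (fderiv ℝ (d k)) z (0, 1) (1, 0)
        = fderiv ℝ (fderiv ℝ (d k)) z (1, 0) (0, 1) :=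
      ((hd k).contDiffAt.isSymmSndFDerivAt (by norm_num)) _ _
    have e1 : fderiv ℝ (fun y => κ y ⨯₃ d k y) z (0, 1)
        = fderiv ℝ (fun y => ω y ⨯₃ d k y) z (1, 0) := by
      have l1 : (fun y => κ y ⨯₃ d k y) = fun y => fderiv ℝ (d k) y (1, 0) := by
        funext y; rw [hs k y]
      have l2 : (fun y => ω y ⨯₃ d k y) = fun y => fderiv ℝ (d k) y (0, 1) := by
        funext y; rw [ht k y]
      rw [l1, l2, (hder (1, 0) z).fderiv, (hder (0, 1) z).fderiv]
      exact hsymm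
    have r1 := hcross κ hκd z (0, 1)
    have r2 := hcross ω hωd z (1, 0)
    rw [r1, r2] at e1
    rw [hs k z, ht k z] at e1
    exact e1
  -- reduce to: u ⨯₃ d k z = 0 for all k
  set u : Fin 3 → ℝ := fderiv ℝ κ z (0, 1) - fderiv ℝ ω z (1, 0) - ω z ⨯₃ κ z with hu
  have hcz : ∀ k, u ⨯₃ d k z = 0 := by
    intro k
    have hk := key k
    have hl : ω z ⨯₃ (κ z ⨯₃ d k z) - κ z ⨯₃ (ω z ⨯₃ d k z) = (ω z ⨯₃ κ z) ⨯₃ d k z := by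
      rw [leibniz_cross (ω z) (κ z) (d k z)]
      abel
    have he : u ⨯₃ d k z = fderiv ℝ κ z (0, 1) ⨯₃ d k z - fderiv ℝ ω z (1, 0) ⨯₃ d k z
        - (ω z ⨯₃ κ z) ⨯₃ d k z := by
      simp only [hu, map_sub, LinearMap.sub_apply]
    rw [he, ← hl]
    linear_combination (norm := abel) hk
  -- orthonormal frame spans, so u = 0
  have h0 : ∀ k : Fin 3, u = (d k z ⬝ᵥ u) • d k z := by
    intro k
    have h := triple_cross u (d k z)
    rw [hcz k, map_zero, horth z k k, if_pos rfl, one_smul] at h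
    exact sub_eq_zero.mp h.symm
  have hd1 : d 1 z ⬝ᵥ u = 0 := by
    conv_lhs => rw [h0 0]
    simp [dotProduct_smul, horth z 1 0]
  have hu0 : u = 0 := by rw [h0 1, hd1, zero_smul]
  have h2 : fderiv ℝ κ z (0, 1) - fderiv ℝ ω z (1, 0) - ω z ⨯₃ κ z = 0 := hu0
  rw [sub_sub, sub_eq_zero] at h2
  exact h2
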